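/- arXiv:1610.07923 — 2 statements merged into one kernel-verified Lean document; each statement's English description precedes it below -/
import Mathlib

section
/- Let (X, σ) be a subshift of finite type and φ an endomorphism of X such that |I(-n, φ)| = W^+(n,φ) - W^-(n,φ) + 1 → ∞ as n → ∞. Then there exists n₀ such that for all n ≥ n₀, the interval I(-n, φ) = [-W^+(n,φ), -W^-(n,φ)] φ^n-codes {0}. If X is a full shift, n₀ = 0 works and the growth hypothesis is unnecessary. -/
open Filter Topology

/-- The left shift on bi-infinite sequences. -/
def shift {A : Type*} (x : ℤ → A) : ℤ → A := fun n => x (n + 1)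

/-- The shift by `k` places (`σ^k`). -/
def zshift {A : Type*} (k : ℤ) (x : ℤ → A) : ℤ → A := fun n => x (n + k)

/-- A subshift: a closed, shift-invariant subset of `Σ^ℤ`. -/
def IsSubshift {A : Type*} [TopologicalSpace A] (X : Set (ℤ → A)) : Prop :=
  IsClosed X ∧ shift '' X = X

/-- An endomorphism of the subshift `X`: a continuous shift-commuting surjection of `X`. -/
structure IsEndo {A : Type*} [TopologicalSpace A] (X : Set (ℤ → A))
    (φ : (ℤ → A) → (ℤ → A)) : Prop where
  maps : Set.MapsTo φ X X
  surj : Set.SurjOn φ X X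
  cont : ContinuousOn φ X
  comm : ∀ x ∈ X, φ (shift x) = shift (φ x)

/-- `S` φ-codes `T`: agreement of two points of `X` on `S` forces agreement of their
φ-images on `T`. -/
def Codes {A : Type*} (X : Set (ℤ → A)) (φ : (ℤ → A) → (ℤ → A)) (S T : Set ℤ) : Prop :=
  ∀ x ∈ X, ∀ y ∈ X, (∀ i ∈ S, x i = y i) → ∀ j ∈ T, φ x j = φ y j

/-- The set of integers `W` such that `[0,∞)` φⁿ-codes `[W,∞)`; `W⁺(n,φ)` is its
least element. -/
def WplusSet {A : Type*} (X : Set (ℤ → A)) (φ : (ℤ → A) → (ℤ → A)) (n : ℕ) : Set ℤ :=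
  {W | Codes X (φ^[n]) (Set.Ici 0) (Set.Ici W)}

/-- The set of integers `W` such that `(-∞,0]` φⁿ-codes `(-∞,W]`; `W⁻(n,φ)` is its
greatest element. -/
def WminusSet {A : Type*} (X : Set (ℤ → A)) (φ : (ℤ → A) → (ℤ → A)) (n : ℕ) : Set ℤ :=
  {W | Codes X (φ^[n]) (Set.Iic 0) (Set.Iic W)}

/-- A subshift of finite type: defined by a finite set of excluded words. -/
def IsSFT {A : Type*} (X : Set (ℤ → A)) : Prop :=
  ∃ F : Set (List A), F.Finite ∧
    ∀ x : ℤ → A, x ∈ X ↔ ∀ (n : ℤ), ∀ w ∈ F, ∃ i : Fin w.length, x (n + i) ≠ w.get i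



section Aux

variable {A : Type*} [TopologicalSpace A]

lemma zshift_mem {X : Set (ℤ → A)} (hX : shift '' X = X) (k : ℤ) :
    ∀ x ∈ X, zshift k x ∈ X := by
  induction k using Int.induction_on with
  | zero =>
    intro x hx
    have : zshift 0 x = x := funext fun n => by simp [zshift]
    rwa [this]
  | succ k ih =>
    intro x hx
    have h1 : shift (zshift k x) = zshift ((k : ℤ) + 1) x := by
      funext n; show x (n + 1 + k) = x (n + (k + 1)); congr 1; ring
    have := Set.mem_image_of_mem shift (ih x hx)
    rw [hX, h1] at this
    exact this
  | pred k ih =>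
    intro x hx
    have hmem := ih x hx
    rw [← hX] at hmem
    obtain ⟨y, hy, hsy⟩ := hmem
    have : y = zshift (-(k : ℤ) - 1) x := by
      funext n
      have h1 : y n = shift y (n - 1) := by
        show y n = y (n - 1 + 1); congr 1; ring
      rw [h1, hsy]
      show x (n - 1 + -(k : ℤ)) = x (n + (-(k : ℤ) - 1))
      congr 1; ring
    rwa [this] at hy

lemma endo_zshift_comm {X : Set (ℤ → A)} (hX : shift '' X = X)
    {φ : (ℤ → A) → (ℤ → A)} (hφ : IsEndo X φ) (k : ℤ) :
    ∀ x ∈ X, φ (zshift k x) = zshift k (φ x) := by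
  induction k using Int.induction_on with
  | zero =>
    intro x hx
    have h0 : ∀ y : ℤ → A, zshift 0 y = y := fun y => funext fun n => by simp [zshift]
    rw [h0, h0]
  | succ k ih =>
    intro x hx
    have h1 : ∀ y : ℤ → A, zshift ((k : ℤ) + 1) y = shift (zshift k y) := by
      intro y; funext n; show y (n + (k + 1)) = y (n + 1 + k); congr 1; ring
    rw [h1, hφ.comm _ (zshift_mem hX k x hx), ih x hx, ← h1]
  | pred k ih =>
    intro x hx
    set y := zshift (-(k : ℤ) - 1) x with hy
    have hyX : y ∈ X := zshift_mem hX _ x hx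
    have hsy : shift y = zshift (-(k : ℤ)) x := by
      funext n; show x (n + 1 + (-(k : ℤ) - 1)) = x (n + -(k : ℤ)); congr 1; ring
    have h2 : shift (φ y) = zshift (-(k : ℤ)) (φ x) := by
      rw [← hφ.comm y hyX, hsy, ih x hx]
    funext n
    have h3 : φ y n = shift (φ y) (n - 1) := by
      show φ y n = φ y (n - 1 + 1); congr 1; ring
    rw [h3, h2]
    show φ x (n - 1 + -(k : ℤ)) = φ x (n + (-(k : ℤ) - 1))
    congr 1; ring

lemma iter_maps {X : Set (ℤ → A)} {φ : (ℤ → A) → (ℤ → A)} (hφ : IsEndo X φ) (n : ℕ) :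
    Set.MapsTo (φ^[n]) X X := hφ.maps.iterate n

lemma iter_zshift_comm {X : Set (ℤ → A)} (hX : shift '' X = X)
    {φ : (ℤ → A) → (ℤ → A)} (hφ : IsEndo X φ) (n : ℕ) (k : ℤ) :
    ∀ x ∈ X, φ^[n] (zshift k x) = zshift k (φ^[n] x) := by
  induction n with
  | zero => intro x hx; simp
  | succ n ih =>
    intro x hx
    rw [Function.iterate_succ_apply', Function.iterate_succ_apply',
      ih x hx, endo_zshift_comm hX hφ k _ (iter_maps hφ n hx)]

lemma codes_Ici_shift {X : Set (ℤ → A)} (hX : shift '' X = X)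
    {φ : (ℤ → A) → (ℤ → A)} (hφ : IsEndo X φ) {n : ℕ} {W : ℤ}
    (hcode : Codes X (φ^[n]) (Set.Ici 0) (Set.Ici W)) (a : ℤ) :
    ∀ x ∈ X, ∀ y ∈ X, (∀ i, a ≤ i → x i = y i) →
      ∀ j, W + a ≤ j → φ^[n] x j = φ^[n] y j := by
  intro x hx y hy hagree j hj
  have hx' : zshift a x ∈ X := zshift_mem hX a x hx
  have hy' : zshift a y ∈ X := zshift_mem hX a y hy
  have h1 : ∀ i ∈ Set.Ici (0 : ℤ), zshift a x i = zshift a y i := by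
    intro i hi; exact hagree (i + a) (by simp at hi; omega)
  have h2 := hcode _ hx' _ hy' h1 (j - a) (by simp; omega)
  rw [iter_zshift_comm hX hφ n a x hx, iter_zshift_comm hX hφ n a y hy] at h2
  have : j - a + a = j := by ring
  simpa [zshift, this] using h2

lemma codes_Iic_shift {X : Set (ℤ → A)} (hX : shift '' X = X)
    {φ : (ℤ → A) → (ℤ → A)} (hφ : IsEndo X φ) {n : ℕ} {W : ℤ}
    (hcode : Codes X (φ^[n]) (Set.Iic 0) (Set.Iic W)) (a : ℤ) :
    ∀ x ∈ X, ∀ y ∈ X, (∀ i, i ≤ a → x i = y i) →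
      ∀ j, j ≤ W + a → φ^[n] x j = φ^[n] y j := by
  intro x hx y hy hagree j hj
  have hx' : zshift a x ∈ X := zshift_mem hX a x hx
  have hy' : zshift a y ∈ X := zshift_mem hX a y hy
  have h1 : ∀ i ∈ Set.Iic (0 : ℤ), zshift a x i = zshift a y i := by
    intro i hi; exact hagree (i + a) (by simp at hi; omega)
  have h2 := hcode _ hx' _ hy' h1 (j - a) (by simp; omega)
  rw [iter_zshift_comm hX hφ n a x hx, iter_zshift_comm hX hφ n a y hy] at h2
  have : j - a + a = j := by ring
  simpa [zshift, this] using h2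

lemma core_codes {X : Set (ℤ → A)}
    (hX : shift '' X = X) {φ : (ℤ → A) → (ℤ → A)} (hφ : IsEndo X φ) {n : ℕ} {Wp Wm : ℤ}
    (hp : Codes X (φ^[n]) (Set.Ici 0) (Set.Ici Wp))
    (hm : Codes X (φ^[n]) (Set.Iic 0) (Set.Iic Wm))
    (hglue : ∀ x ∈ X, ∀ y ∈ X, (∀ i ∈ Set.Icc (-Wp) (-Wm), x i = y i) →
      (fun j => if j ≤ -Wm then x j else y j) ∈ X) :
    Codes X (φ^[n]) (Set.Icc (-Wp) (-Wm)) {0} := by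
  intro x hx y hy hagree j hj
  have hj0 : j = 0 := hj
  subst hj0
  set z : ℤ → A := fun j => if j ≤ -Wm then x j else y j with hzdef
  have hzX : z ∈ X := hglue x hx y hy hagree
  have h1 : φ^[n] z 0 = φ^[n] x 0 := by
    refine codes_Iic_shift hX hφ hm (-Wm) z hzX x hx ?_ 0 (by omega)
    intro i hi
    simp only [hzdef, if_pos hi]
  have h2 : φ^[n] z 0 = φ^[n] y 0 := by
    refine codes_Ici_shift hX hφ hp (-Wp) z hzX y hy ?_ 0 (by omega)
    intro i hi
    by_cases h : i ≤ -Wm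
    · simp only [hzdef, if_pos h]
      exact hagree i ⟨hi, h⟩
    · simp only [hzdef, if_neg h]
  rw [← h1, h2]

end Aux

/-- For an SFT, if the widths `|I(-n,φ)| = W⁺(n) - W⁻(n) + 1` tend to infinity, then for
all large `n` the interval `I(-n,φ) = [-W⁺(n), -W⁻(n)]` φⁿ-codes `{0}`; for a full shift
this holds for all `n` with no growth hypothesis. -/
theorem lightcone_interval_codes {A : Type*} [Fintype A] [TopologicalSpace A]
    [DiscreteTopology A] (X : Set (ℤ → A)) (hX : IsSubshift X) (hSFT : IsSFT X)
    (hinf : X.Infinite)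
    (φ : (ℤ → A) → (ℤ → A)) (hφ : IsEndo X φ)
    (Wp Wm : ℕ → ℤ)
    (hWp : ∀ n, IsLeast (WplusSet X φ n) (Wp n))
    (hWm : ∀ n, IsGreatest (WminusSet X φ n) (Wm n)) :
    ((Tendsto (fun n : ℕ => Wp n - Wm n + 1) atTop atTop) →
      ∃ n₀ : ℕ, ∀ n : ℕ, n₀ ≤ n → Codes X (φ^[n]) (Set.Icc (-(Wp n)) (-(Wm n))) {0}) ∧
    (X = Set.univ → ∀ n : ℕ, Codes X (φ^[n]) (Set.Icc (-(Wp n)) (-(Wm n))) {0}) := by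
  obtain ⟨F, hFfin, hFmem⟩ := hSFT
  set L : ℤ := ((hFfin.toFinset.sup fun w => w.length : ℕ) : ℤ) with hLdef
  have hL : ∀ w ∈ F, (w.length : ℤ) ≤ L := by
    intro w hw
    have : w.length ≤ (hFfin.toFinset.sup fun w => w.length) :=
      Finset.le_sup (by simpa using hw)
    rw [hLdef]; exact_mod_cast this
  have glue_SFT : ∀ n : ℕ, L - 1 ≤ Wp n - Wm n + 1 →
      ∀ x ∈ X, ∀ y ∈ X, (∀ i ∈ Set.Icc (-(Wp n)) (-(Wm n)), x i = y i) →
      (fun j => if j ≤ -(Wm n) then x j else y j) ∈ X := by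
    intro n hgap x hx y hy hagree
    rw [hFmem]
    intro m w hw
    by_cases hcase : m + (w.length : ℤ) - 1 ≤ -(Wm n)
    · obtain ⟨i, hi⟩ := (hFmem x).mp hx m w hw
      refine ⟨i, ?_⟩
      have hilt : (i : ℕ) < w.length := i.isLt
      have hle : (m + (i : ℤ)) ≤ -(Wm n) := by
        have : ((i : ℕ) : ℤ) < (w.length : ℤ) := by exact_mod_cast hilt
        omega
      simpa [if_pos hle] using hi
    · obtain ⟨i, hi⟩ := (hFmem y).mp hy m w hw
      refine ⟨i, ?_⟩
      have hilt : ((i : ℕ) : ℤ) < (w.length : ℤ) := by exact_mod_cast i.isLt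
      have hwL := hL w hw
      have hmi : -(Wp n) ≤ m + (i : ℤ) := by omega
      by_cases h2 : (m + (i : ℤ)) ≤ -(Wm n)
      · have heq := hagree (m + (i : ℤ)) ⟨hmi, h2⟩
        simp only [if_pos h2, heq]
        exact hi
      · simpa [if_neg h2] using hi
  constructor
  · intro htend
    have hev := htend.eventually_ge_atTop (L - 1)
    obtain ⟨n₀, hn₀⟩ := Filter.eventually_atTop.mp hev
    refine ⟨n₀, fun n hn => ?_⟩
    exact core_codes hX.2 hφ (hWp n).1 (hWm n).1 (glue_SFT n (hn₀ n hn))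
  · intro hfull n
    refine core_codes hX.2 hφ (hWp n).1 (hWm n).1 ?_
    intro x hx y hy hagree
    rw [hfull]; trivial
end

section
/- Let φ be an endomorphism of a subshift (X, σ) with topological entropy h(σ) = lim (log P_X(n))/n. Then the topological entropy of φ satisfies h(φ) ≤ A(φ)·h(σ), where A(φ) = lim_{n→∞} ℓ(n, φ)/n and ℓ(n, φ) is the minimal length of an interval containing 0 that φ^n-codes {0}. In particular, if A(φ) = 0 then h(φ) = 0. -/
open Filter Topology

-- aux lemmas
lemma zshift_zshift {A : Type*} (k j : ℤ) (x : ℤ → A) :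
    zshift k (zshift j x) = zshift (j + k) x := by
  funext n; simp [zshift, add_assoc, add_comm k j]

lemma zshift_zero {A : Type*} (x : ℤ → A) : zshift 0 x = x := by
  funext n; simp [zshift]

lemma zshift_one {A : Type*} (x : ℤ → A) : zshift 1 x = shift x := rfl

lemma mem_zshift {A : Type*} [TopologicalSpace A] {X : Set (ℤ → A)}
    (hX : IsSubshift X) (k : ℤ) : ∀ x ∈ X, zshift k x ∈ X := by
  have h1 : ∀ x ∈ X, zshift 1 x ∈ X := by
    intro x hx
    rw [zshift_one]
    rw [← hX.2]; exact ⟨x, hx, rfl⟩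
  have hm1 : ∀ x ∈ X, zshift (-1) x ∈ X := by
    intro x hx
    rw [← hX.2] at hx
    obtain ⟨y, hy, rfl⟩ := hx
    rw [← zshift_one, zshift_zshift]
    norm_num [zshift_zero, hy]
  induction k using Int.induction_on with
  | zero => intro x hx; rwa [zshift_zero]
  | succ n ih =>
      intro x hx
      have := h1 _ (ih x hx)
      rwa [zshift_zshift] at this
  | pred n ih =>
      intro x hx
      have := hm1 _ (ih x hx)
      rw [zshift_zshift] at this
      convert this using 2
      ring

lemma phi_zshift {A : Type*} [TopologicalSpace A] {X : Set (ℤ → A)}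
    {φ : (ℤ → A) → (ℤ → A)} (hX : IsSubshift X) (hφ : IsEndo X φ) (k : ℤ) :
    ∀ x ∈ X, φ (zshift k x) = zshift k (φ x) := by
  induction k using Int.induction_on with
  | zero => intro x hx; rw [zshift_zero, zshift_zero]
  | succ n ih =>
      intro x hx
      have : zshift ((n : ℤ) + 1) x = zshift 1 (zshift n x) := (zshift_zshift _ _ _).symm
      rw [this, zshift_one, hφ.comm _ (mem_zshift hX n x hx), ← zshift_one, ih x hx,
        zshift_zshift]
  | pred n ih =>
      intro x hx
      set z := zshift (-(n : ℤ) - 1) x with hz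
      have hzX : z ∈ X := mem_zshift hX _ x hx
      have h1 : zshift 1 z = zshift (-(n : ℤ)) x := by
        rw [hz, zshift_zshift]; ring_nf
      have h2 : φ (zshift 1 z) = zshift 1 (φ z) := by
        rw [zshift_one, zshift_one]; exact hφ.comm z hzX
      have h3 : zshift 1 (φ z) = zshift (-(n:ℤ)) (φ x) := by
        rw [← h2, h1, ih x hx]
      have := congrArg (zshift (-1)) h3
      rw [zshift_zshift, zshift_zshift] at this
      norm_num [zshift_zero] at this
      rw [hz] at this
      convert this using 2
      ring

lemma iter_maps_s18 {A : Type*} [TopologicalSpace A] {X : Set (ℤ → A)}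
    {φ : (ℤ → A) → (ℤ → A)} (hφ : IsEndo X φ) (p : ℕ) :
    ∀ x ∈ X, φ^[p] x ∈ X := by
  induction p with
  | zero => intro x hx; simpa using hx
  | succ n ih =>
      intro x hx
      rw [Function.iterate_succ_apply']
      exact hφ.maps (ih x hx)

lemma iter_zshift {A : Type*} [TopologicalSpace A] {X : Set (ℤ → A)}
    {φ : (ℤ → A) → (ℤ → A)} (hX : IsSubshift X) (hφ : IsEndo X φ) (p : ℕ) (k : ℤ) :
    ∀ x ∈ X, φ^[p] (zshift k x) = zshift k (φ^[p] x) := by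
  induction p with
  | zero => intro x hx; simp
  | succ n ih =>
      intro x hx
      rw [Function.iterate_succ_apply', Function.iterate_succ_apply', ih x hx,
        phi_zshift hX hφ k _ (iter_maps_s18 hφ n x hx)]

lemma codes_mono {A : Type*} {X : Set (ℤ → A)} {φ : (ℤ → A) → (ℤ → A)}
    {S S' T : Set ℤ} (hSS : S ⊆ S') (h : Codes X φ S T) : Codes X φ S' T := by
  intro x hx y hy hagree j hj
  exact h x hx y hy (fun i hi => hagree i (hSS hi)) j hj

lemma codes_shift {A : Type*} [TopologicalSpace A] {X : Set (ℤ → A)}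
    {φ : (ℤ → A) → (ℤ → A)} (hX : IsSubshift X) (hφ : IsEndo X φ) {p : ℕ} {a b : ℤ}
    (h : Codes X (φ^[p]) (Set.Icc a b) {0}) (t : ℤ) :
    Codes X (φ^[p]) (Set.Icc (a + t) (b + t)) {t} := by
  intro x hx y hy hagree j hj
  rcases Set.mem_singleton_iff.1 hj with rfl
  have hx' : zshift j x ∈ X := mem_zshift hX j x hx
  have hy' : zshift j y ∈ X := mem_zshift hX j y hy
  have hag : ∀ i ∈ Set.Icc a b, zshift j x i = zshift j y i := by
    intro i hi
    exact hagree (i + j) ⟨by linarith [hi.1], by linarith [hi.2]⟩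
  have := h _ hx' _ hy' hag 0 rfl
  rw [iter_zshift hX hφ p j x hx, iter_zshift hX hφ p j y hy] at this
  simpa [zshift] using this

lemma codes_comp {A : Type*} [TopologicalSpace A] {X : Set (ℤ → A)}
    {φ : (ℤ → A) → (ℤ → A)} (hX : IsSubshift X) (hφ : IsEndo X φ) {p q : ℕ}
    {a b a' b' : ℤ} (hab : a ≤ b) (hab' : a' ≤ b')
    (h1 : Codes X (φ^[p]) (Set.Icc a b) {0})
    (h2 : Codes X (φ^[q]) (Set.Icc a' b') {0}) :
    Codes X (φ^[p + q]) (Set.Icc (a + a') (b + b')) {0} := by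
  intro x hx y hy hagree j hj
  rcases Set.mem_singleton_iff.1 hj with rfl
  have hmid : ∀ t ∈ Set.Icc a' b', φ^[p] x t = φ^[p] y t := by
    intro t ht
    refine codes_shift hX hφ h1 t x hx y hy ?_ t rfl
    intro i hi
    exact hagree i ⟨by linarith [hi.1, ht.1], by linarith [hi.2, ht.2]⟩
  have := h2 _ (iter_maps_s18 hφ p x hx) _ (iter_maps_s18 hφ p y hy) hmid 0 rfl
  rwa [← Function.iterate_add_apply, ← Function.iterate_add_apply, Nat.add_comm] at this

lemma codes_pow {A : Type*} [TopologicalSpace A] {X : Set (ℤ → A)}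
    {φ : (ℤ → A) → (ℤ → A)} (hX : IsSubshift X) (hφ : IsEndo X φ) {k : ℕ} {a b : ℤ}
    (ha : a ≤ 0) (hb : 0 ≤ b)
    (h : Codes X (φ^[k]) (Set.Icc a b) {0}) (q : ℕ) :
    Codes X (φ^[k * q]) (Set.Icc (q * a) (q * b)) {0} := by
  induction q with
  | zero =>
      intro x hx y hy hagree j hj
      rcases Set.mem_singleton_iff.1 hj with rfl
      simpa using hagree 0 (by simp)
  | succ n ih =>
      have := codes_comp hX hφ (le_trans ha hb)
        (mul_le_mul_of_nonneg_left (le_trans ha hb) (by positivity : (0:ℤ) ≤ (n:ℤ))) h ih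
      have e : k + k * n = k * (n + 1) := by ring
      rw [e] at this
      convert this using 2 <;> push_cast <;> ring

lemma card_rect_le {A : Type*} [Fintype A] [TopologicalSpace A] {X : Set (ℤ → A)}
    (hX : IsSubshift X) {φ : (ℤ → A) → (ℤ → A)}
    (m n : ℕ) (L : ℤ) (K : ℕ)
    (hcode : ∀ x ∈ X, ∀ y ∈ X, (∀ t ∈ Set.Icc L (L + K - 1), x t = y t) →
      ∀ p : Fin m × Fin n, φ^[(p.2 : ℕ)] x ((p.1 : ℕ) : ℤ) = φ^[(p.2 : ℕ)] y ((p.1 : ℕ) : ℤ)) :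
    Nat.card {w : Fin m × Fin n → A |
        ∃ x ∈ X, ∀ p : Fin m × Fin n, φ^[(p.2 : ℕ)] x ((p.1 : ℕ) : ℤ) = w p} ≤
      Nat.card {w : Fin K → A | ∃ x ∈ X, ∀ i : Fin K, x ((i : ℕ) : ℤ) = w i} := by
  set Rect := {w : Fin m × Fin n → A |
      ∃ x ∈ X, ∀ p : Fin m × Fin n, φ^[(p.2 : ℕ)] x ((p.1 : ℕ) : ℤ) = w p} with hRect
  set W := {w : Fin K → A | ∃ x ∈ X, ∀ i : Fin K, x ((i : ℕ) : ℤ) = w i} with hW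
  have f : ∀ w : Rect, {v : W // ∃ x ∈ X,
      (∀ p : Fin m × Fin n, φ^[(p.2 : ℕ)] x ((p.1 : ℕ) : ℤ) = (w : Fin m × Fin n → A) p) ∧
      ∀ i : Fin K, x (L + (i : ℕ)) = (v : Fin K → A) i} := by
    rintro ⟨w, hw⟩
    have hw' : ∃ x, x ∈ X ∧ ∀ p : Fin m × Fin n, φ^[(p.2 : ℕ)] x ((p.1 : ℕ) : ℤ) = w p := hw
    set x := hw'.choose with hxdef
    obtain ⟨hx, hxw⟩ := hw'.choose_spec
    refine ⟨⟨fun i => x (L + (i : ℕ)), ?_⟩, x, hx, hxw, fun i => rfl⟩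
    refine ⟨zshift L x, mem_zshift hX L x hx, fun i => ?_⟩
    simp [zshift, add_comm]
  have hinj : Function.Injective (fun w : Rect => (f w).1) := by
    rintro w w' he
    obtain ⟨x, hx, hxw, hxv⟩ := (f w).2
    obtain ⟨x', hx', hxw', hxv'⟩ := (f w').2
    have hagree : ∀ t ∈ Set.Icc L (L + K - 1), x t = x' t := by
      intro t ht
      have h0 : (0:ℤ) ≤ t - L := by linarith [ht.1]
      have h1 : t - L < K := by linarith [ht.2]
      have h2 : (t - L).toNat < K := by omega
      have := hxv ⟨(t - L).toNat, h2⟩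
      have := hxv' ⟨(t - L).toNat, h2⟩
      have hval : ((f w).1 : Fin K → A) = ((f w').1 : Fin K → A) := by
        exact congrArg Subtype.val he
      have heq : x (L + ((t - L).toNat : ℤ)) = x' (L + ((t - L).toNat : ℤ)) := by
        rw [hxv ⟨(t - L).toNat, h2⟩, hxv' ⟨(t - L).toNat, h2⟩, hval]
      have htL : L + ((t - L).toNat : ℤ) = t := by omega
      rwa [htL] at heq
    apply Subtype.ext
    funext p
    rw [← hxw p, ← hxw' p]
    exact hcode x hx x' hx' hagree p
  calc Nat.card Rect ≤ Nat.card W := Nat.card_le_card_of_injective _ hinj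

/-- `h_top(φ) ≤ A(φ) · h_top(σ)`, where `A(φ) = lim ℓ(n,φ)/n` is the asymptotic spread,
`h_top(σ)` is the exponential growth rate of the word complexity of `X`, and `h_top(φ)`
is computed from the complexity of rectangles in the spacetime of `φ`.
In particular if `A(φ) = 0` then `h_top(φ) = 0`. -/
theorem entropy_le_spread {A : Type*} [Fintype A] [TopologicalSpace A]
    [DiscreteTopology A] (X : Set (ℤ → A)) (hX : IsSubshift X) (hinf : X.Infinite)
    (φ : (ℤ → A) → (ℤ → A)) (hφ : IsEndo X φ)
    (hsigma : ℝ)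
    (hhsigma : Tendsto (fun n : ℕ =>
        Real.log (Nat.card {w : Fin n → A | ∃ x ∈ X, ∀ i : Fin n, x ((i : ℕ) : ℤ) = w i}) / n)
      atTop (𝓝 hsigma))
    (c : ℕ → ℝ)
    (hc : ∀ m : ℕ, Tendsto (fun n : ℕ =>
        Real.log (Nat.card {w : Fin m × Fin n → A |
          ∃ x ∈ X, ∀ p : Fin m × Fin n, φ^[(p.2 : ℕ)] x ((p.1 : ℕ) : ℤ) = w p}) / n)
      atTop (𝓝 (c m)))
    (hphi : ℝ) (hhphi : Tendsto c atTop (𝓝 hphi))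
    (l : ℕ → ℕ)
    (hl : ∀ n : ℕ, IsLeast {L : ℕ | ∃ a b : ℤ, a ≤ 0 ∧ 0 ≤ b ∧ (L : ℤ) = b - a + 1 ∧
        Codes X (φ^[n]) (Set.Icc a b) {0}} (l n))
    (Aphi : ℝ) (hA : Tendsto (fun n : ℕ => (l n : ℝ) / n) atTop (𝓝 Aphi)) :
    hphi ≤ Aphi * hsigma ∧ (Aphi = 0 → hphi = 0) := by
  obtain ⟨x0, hx0⟩ := hinf.nonempty
  set P : ℕ → ℕ := fun n =>
    Nat.card {w : Fin n → A | ∃ x ∈ X, ∀ i : Fin n, x ((i : ℕ) : ℤ) = w i} with hPdef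
  set R : ℕ → ℕ → ℕ := fun m n =>
    Nat.card {w : Fin m × Fin n → A |
      ∃ x ∈ X, ∀ p : Fin m × Fin n, φ^[(p.2 : ℕ)] x ((p.1 : ℕ) : ℤ) = w p} with hRdef
  have hhsigma' : Tendsto (fun n : ℕ => Real.log (P n) / n) atTop (𝓝 hsigma) := hhsigma
  have hc' : ∀ m : ℕ, Tendsto (fun n : ℕ => Real.log (R m n) / n) atTop (𝓝 (c m)) := hc
  have hP1 : ∀ K : ℕ, 1 ≤ P K := by
    intro K
    have : Nonempty {w : Fin K → A | ∃ x ∈ X, ∀ i : Fin K, x ((i : ℕ) : ℤ) = w i} :=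
      ⟨⟨fun i => x0 ((i : ℕ) : ℤ), x0, hx0, fun i => rfl⟩⟩
    exact Nat.card_pos
  have hR1 : ∀ m n : ℕ, 1 ≤ R m n := by
    intro m n
    have : Nonempty {w : Fin m × Fin n → A |
        ∃ x ∈ X, ∀ p : Fin m × Fin n, φ^[(p.2 : ℕ)] x ((p.1 : ℕ) : ℤ) = w p} :=
      ⟨⟨fun p => φ^[(p.2 : ℕ)] x0 ((p.1 : ℕ) : ℤ), x0, hx0, fun p => rfl⟩⟩
    exact Nat.card_pos
  have hs0 : 0 ≤ hsigma :=
    ge_of_tendsto' hhsigma' fun n =>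
      div_nonneg (Real.log_nonneg (by exact_mod_cast hP1 n)) (Nat.cast_nonneg n)
  have hc0 : ∀ m, 0 ≤ c m := fun m =>
    ge_of_tendsto' (hc' m) fun n =>
      div_nonneg (Real.log_nonneg (by exact_mod_cast hR1 m n)) (Nat.cast_nonneg n)
  have hphi0 : 0 ≤ hphi := ge_of_tendsto' hhphi hc0
  -- the key estimate
  have key : ∀ m k : ℕ, 1 ≤ k → c m ≤ (((l k : ℝ) - 1) / k) * hsigma := by
    intro m k hk
    obtain ⟨a, b, ha, hb, hab, hcod⟩ := (hl k).1
    have hwit : ∀ r : ℕ, ∃ a' b' : ℤ, a' ≤ 0 ∧ 0 ≤ b' ∧ ((l r : ℤ) = b' - a' + 1) ∧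
        Codes X (φ^[r]) (Set.Icc a' b') {0} := fun r => (hl r).1
    choose ar br har hbr hlr hcodr using hwit
    set C : ℕ := (Finset.range k).sup (fun r => (ar r).natAbs) with hC
    set MB : ℕ := (Finset.range k).sup (fun r => (br r).natAbs) with hMB
    have harC : ∀ r < k, -(C : ℤ) ≤ ar r := by
      intro r hr
      have h : (ar r).natAbs ≤ C :=
        Finset.le_sup (f := fun r => (ar r).natAbs) (Finset.mem_range.2 hr)
      omega
    have hbrM : ∀ r < k, br r ≤ (MB : ℤ) := by
      intro r hr
      have h : (br r).natAbs ≤ MB :=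
        Finset.le_sup (f := fun r => (br r).natAbs) (Finset.mem_range.2 hr)
      omega
    set d : ℕ := l k - 1 with hd
    have hlk1 : 1 ≤ l k := by omega
    have hdz : (d : ℤ) = b - a := by omega
    set Q : ℕ → ℕ := fun n => (n - 1) / k with hQ
    set Kf : ℕ → ℕ := fun n => Q n * d + (C + MB + m) with hKf
    set L : ℕ → ℤ := fun n => (Q n : ℤ) * a - C with hL
    have hcode : ∀ n : ℕ, ∀ x ∈ X, ∀ y ∈ X,
        (∀ t ∈ Set.Icc (L n) (L n + (Kf n : ℤ) - 1), x t = y t) →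
        ∀ p : Fin m × Fin n, φ^[(p.2 : ℕ)] x ((p.1 : ℕ) : ℤ) = φ^[(p.2 : ℕ)] y ((p.1 : ℕ) : ℤ) := by
      intro n x hx y hy hag p
      set j := (p.2 : ℕ) with hj
      set i := (p.1 : ℕ) with hi
      have hik : i < m := p.1.isLt
      have hjn : j < n := p.2.isLt
      have hq : j / k ≤ Q n := Nat.div_le_div_right (by omega)
      have hrk : j % k < k := Nat.mod_lt _ (by omega)
      have base : Codes X (φ^[k * (j / k)])
          (Set.Icc (((j / k : ℕ) : ℤ) * a) (((j / k : ℕ) : ℤ) * b)) {0} :=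
        codes_pow hX hφ ha hb hcod (j / k)
      have comp : Codes X (φ^[k * (j / k) + j % k])
          (Set.Icc (((j / k : ℕ) : ℤ) * a + ar (j % k))
            (((j / k : ℕ) : ℤ) * b + br (j % k))) {0} := by
        refine codes_comp hX hφ ?_ ?_ base (hcodr (j % k))
        · exact mul_le_mul_of_nonneg_left (le_trans ha hb) (by positivity)
        · linarith [har (j % k), hbr (j % k)]
      rw [Nat.div_add_mod] at comp
      have shifted := codes_shift hX hφ comp (i : ℤ)
      refine shifted x hx y hy ?_ (i : ℤ) rfl
      intro t ht
      obtain ⟨ht1, ht2⟩ := ht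
      have h1 : (Q n : ℤ) * a ≤ ((j / k : ℕ) : ℤ) * a :=
        mul_le_mul_of_nonpos_right (by exact_mod_cast hq) ha
      have h2 : ((j / k : ℕ) : ℤ) * b ≤ (Q n : ℤ) * b :=
        mul_le_mul_of_nonneg_right (by exact_mod_cast hq) hb
      have h3 := harC _ hrk
      have h4 := hbrM _ hrk
      have h5 : (Kf n : ℤ) = (Q n : ℤ) * d + C + MB + m := by
        simp only [hKf]; push_cast; ring
      have h6 : L n = (Q n : ℤ) * a - C := by simp only [hL]
      have h7 : (Q n : ℤ) * (b - a) = (Q n : ℤ) * b - (Q n : ℤ) * a := by ring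
      have hi0 : (0 : ℤ) ≤ (i : ℤ) := Int.ofNat_nonneg i
      have hi1 : (i : ℤ) ≤ (m : ℤ) - 1 := by omega
      refine hag t ⟨?_, ?_⟩
      · rw [h6]; linarith
      · rw [h6, h5, hdz]; linarith
    have hRP : ∀ n : ℕ, R m n ≤ P (Kf n) := fun n =>
      card_rect_le hX m n (L n) (Kf n) (hcode n)
    have hfg : ∀ n : ℕ, Real.log (R m n) / n ≤ Real.log (P (Kf n)) / n := fun n =>
      div_le_div_of_nonneg_right
        (Real.log_le_log (by exact_mod_cast hR1 m n) (by exact_mod_cast hRP n))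
        (Nat.cast_nonneg n)
    -- limits
    have hkR : (0 : ℝ) < k := by exact_mod_cast hk
    have hQlim : Tendsto (fun n : ℕ => (Q n : ℝ) / n) atTop (𝓝 (1 / k)) := by
      have hlo : Tendsto (fun n : ℕ => 1 / (k : ℝ) - 1 / n) atTop (𝓝 (1 / k)) := by
        simpa using (tendsto_const_nhds (x := 1 / (k : ℝ))).sub
          tendsto_one_div_atTop_nhds_zero_nat
      refine tendsto_of_tendsto_of_tendsto_of_le_of_le' hlo tendsto_const_nhds ?_ ?_
      · filter_upwards [eventually_ge_atTop 1] with n hn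
        have hn0 : (0 : ℝ) < n := by exact_mod_cast hn
        have e : k * Q n + (n - 1) % k = n - 1 := Nat.div_add_mod (n - 1) k
        have eR : (k : ℝ) * Q n + (((n - 1) % k : ℕ) : ℝ) = (n : ℝ) - 1 := by
          have e2 : ((k * Q n + (n - 1) % k : ℕ) : ℝ) = ((n - 1 : ℕ) : ℝ) := by rw [e]
          rw [Nat.cast_sub hn] at e2
          push_cast at e2
          linarith
        have hmR : (((n - 1) % k : ℕ) : ℝ) ≤ (k : ℝ) - 1 := by
          have h15 : (n - 1) % k ≤ k - 1 := by
            have := Nat.mod_lt (n - 1) (show 0 < k by omega)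
            omega
          have h16 : ((((n : ℕ) - 1) % k : ℕ) : ℝ) ≤ ((k - 1 : ℕ) : ℝ) := by exact_mod_cast h15
          rw [Nat.cast_sub hk] at h16
          push_cast at h16
          linarith
        have hkQ : (n : ℝ) - k ≤ (k : ℝ) * Q n := by linarith
        rw [div_sub_div _ _ (ne_of_gt hkR) (ne_of_gt hn0),
          div_le_div_iff₀ (by positivity) hn0]
        nlinarith [mul_le_mul_of_nonneg_right hkQ (le_of_lt hn0)]
      · filter_upwards with n
        rcases Nat.eq_zero_or_pos n with h | h
        · simp [h]
        · have hn0 : (0 : ℝ) < n := by exact_mod_cast h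
          have hub : Q n * k ≤ n := le_trans (Nat.div_mul_le_self _ _) (by omega)
          have hubR : (Q n : ℝ) * k ≤ n := by exact_mod_cast hub
          rw [div_le_div_iff₀ hn0 hkR]
          nlinarith
    have hKfn : ∀ n : ℕ, (Kf n : ℝ) / n = (Q n : ℝ) / n * d + ((C + MB + m : ℕ) : ℝ) * (1 / n) := by
      intro n
      simp only [hKf]
      push_cast
      ring
    have hKlim : Tendsto (fun n : ℕ => (Kf n : ℝ) / n) atTop (𝓝 ((d : ℝ) / k)) := by
      have h10 := (hQlim.mul_const (d : ℝ)).add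
        (tendsto_one_div_atTop_nhds_zero_nat.const_mul ((C + MB + m : ℕ) : ℝ))
      have h11 : (1 : ℝ) / k * d + ((C + MB + m : ℕ) : ℝ) * 0 = (d : ℝ) / k := by ring
      rw [← h11]
      exact h10.congr fun n => (hKfn n).symm
    have hglim : Tendsto (fun n : ℕ => Real.log (P (Kf n)) / n) atTop (𝓝 ((d : ℝ) / k * hsigma)) := by
      by_cases hd0 : d = 0
      · have hKc : ∀ n : ℕ, Kf n = C + MB + m := by intro n; simp [hKf, hd0]
        have h12 := tendsto_const_div_atTop_nhds_zero_nat (Real.log (P (C + MB + m)))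
        have h13 : ((d : ℝ) / k * hsigma) = 0 := by rw [hd0]; simp
        rw [h13]
        exact h12.congr fun n => by rw [hKc n]
      · have hd1 : 1 ≤ d := by omega
        have hQtop : Tendsto Q atTop atTop := by
          refine Filter.tendsto_atTop.2 fun b => ?_
          filter_upwards [eventually_ge_atTop (k * b + 1)] with n hn
          have h17 : b * k ≤ n - 1 := by rw [mul_comm]; omega
          exact (Nat.le_div_iff_mul_le (by omega)).2 h17
        have hKtop : Tendsto Kf atTop atTop := by
          refine tendsto_atTop_mono (fun n => ?_) hQtop
          have h13 : Q n * 1 ≤ Q n * d := Nat.mul_le_mul_left _ hd1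
          rw [Nat.mul_one] at h13
          exact le_trans h13 (Nat.le_add_right _ _)
        have h14 := (hhsigma'.comp hKtop).mul hKlim
        have hev : (fun n : ℕ => Real.log (P (Kf n)) / (Kf n) * ((Kf n : ℝ) / n))
            =ᶠ[atTop] fun n : ℕ => Real.log (P (Kf n)) / n := by
          filter_upwards [hKtop.eventually_ge_atTop 1] with n hn
          have hKn0 : (Kf n : ℝ) ≠ 0 := by
            have : (0 : ℝ) < Kf n := by exact_mod_cast hn
            linarith
          field_simp
        rw [show (d : ℝ) / k * hsigma = hsigma * ((d : ℝ) / k) by ring]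
        exact h14.congr' hev
    have hckey : c m ≤ (d : ℝ) / k * hsigma :=
      le_of_tendsto_of_tendsto' (hc' m) hglim hfg
    have hdcast : ((l k : ℝ) - 1) = ((d : ℕ) : ℝ) := by
      rw [hd, Nat.cast_sub hlk1]
      simp
    rw [hdcast]
    exact hckey
  -- conclude
  have keym : ∀ m : ℕ, c m ≤ Aphi * hsigma := by
    intro m
    have h1 : Tendsto (fun kk : ℕ => ((l kk : ℝ) - 1) / kk * hsigma) atTop
        (𝓝 (Aphi * hsigma)) := by
      have h2 : Tendsto (fun kk : ℕ => (l kk : ℝ) / kk - 1 / kk) atTop (𝓝 (Aphi - 0)) :=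
        hA.sub tendsto_one_div_atTop_nhds_zero_nat
      rw [sub_zero] at h2
      exact (h2.mul_const hsigma).congr fun kk => by rw [sub_div]
    exact ge_of_tendsto h1 (eventually_atTop.2 ⟨1, fun kk hkk => key m kk hkk⟩)
  have hfinal : hphi ≤ Aphi * hsigma := le_of_tendsto hhphi (Eventually.of_forall keym)
  exact ⟨hfinal, fun h0 => le_antisymm (by simpa [h0] using hfinal) hphi0⟩
end
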